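/- For a commutative non-autonomous system (X, f_{1,∞}), Banks's condition implies weak mixing: if for any three non-empty open sets U, V, W there exists n with f_1^n(U) ∩ V ≠ ∅ and f_1^n(U) ∩ W ≠ ∅, then for any non-empty open sets U_1, U_2, V_1, V_2 there exists k with f_1^k(U_1) ∩ V_1 ≠ ∅ and f_1^k(U_2) ∩ V_2 ≠ ∅. -/
import Mathlib


open Set Filter MeasureTheory TopologicalSpace

/-- `iterN f n = f_{n-1} ∘ ⋯ ∘ f_0`, the `n`-th iterate of the non-autonomous system. -/
def iterN {X : Type*} (f : ℕ → X → X) : ℕ → X → X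
  | 0 => id
  | n + 1 => f n ∘ iterN f n

/-- Topological transitivity of a non-autonomous system. -/
def NATransitive {X : Type*} [TopologicalSpace X] (f : ℕ → X → X) : Prop :=
  ∀ U V : Set X, IsOpen U → IsOpen V → U.Nonempty → V.Nonempty →
    ∃ n : ℕ, 0 < n ∧ (iterN f n '' U ∩ V).Nonempty

/-- Weak mixing (order 2). -/
def NAWeaklyMixing {X : Type*} [TopologicalSpace X] (f : ℕ → X → X) : Prop :=
  ∀ U₁ U₂ V₁ V₂ : Set X, IsOpen U₁ → IsOpen U₂ → IsOpen V₁ → IsOpen V₂ →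
    U₁.Nonempty → U₂.Nonempty → V₁.Nonempty → V₂.Nonempty →
    ∃ n : ℕ, 0 < n ∧ (iterN f n '' U₁ ∩ V₁).Nonempty ∧ (iterN f n '' U₂ ∩ V₂).Nonempty

/-- Weak mixing of order `m`. -/
def NAWeaklyMixingOrder {X : Type*} [TopologicalSpace X] (f : ℕ → X → X) (m : ℕ) : Prop :=
  ∀ U V : Fin m → Set X, (∀ i, IsOpen (U i)) → (∀ i, IsOpen (V i)) →
    (∀ i, (U i).Nonempty) → (∀ i, (V i).Nonempty) →
    ∃ n : ℕ, 0 < n ∧ ∀ i, (iterN f n '' U i ∩ V i).Nonempty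

/-- Banks's condition. -/
def NABanks {X : Type*} [TopologicalSpace X] (f : ℕ → X → X) : Prop :=
  ∀ U V W : Set X, IsOpen U → IsOpen V → IsOpen W →
    U.Nonempty → V.Nonempty → W.Nonempty →
    ∃ n : ℕ, 0 < n ∧ (iterN f n '' U ∩ V).Nonempty ∧ (iterN f n '' U ∩ W).Nonempty

/-- Topological mixing. -/
def NAMixing {X : Type*} [TopologicalSpace X] (f : ℕ → X → X) : Prop :=
  ∀ U V : Set X, IsOpen U → IsOpen V → U.Nonempty → V.Nonempty →
    ∃ N : ℕ, ∀ n ≥ N, (iterN f n '' U ∩ V).Nonempty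

/-- `blockC f s k = f_{s+k-1} ∘ ⋯ ∘ f_s`. -/
def blockC {X : Type*} (f : ℕ → X → X) (s k : ℕ) : X → X :=
  iterN (fun i => f (s + i)) k

/-- The `k`-th iterate system `f_{1,∞}^{[k]}`. -/
def kthSys {X : Type*} (f : ℕ → X → X) (k : ℕ) : ℕ → X → X :=
  fun n => blockC f (n * k) k

/-- The induced non-autonomous system on Borel probability measures (pushforwards). -/
noncomputable def inducedM {X : Type*} [MeasurableSpace X] [TopologicalSpace X]
    [BorelSpace X] (f : ℕ → X → X) (hf : ∀ n, Continuous (f n)) :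
    ℕ → ProbabilityMeasure X → ProbabilityMeasure X :=
  fun n μ => μ.map ((hf n).measurable.aemeasurable)

/-- The induced non-autonomous system on the hyperspace of non-empty compact subsets. -/
def inducedK {X : Type*} [TopologicalSpace X] (f : ℕ → X → X) (hf : ∀ n, Continuous (f n)) :
    ℕ → NonemptyCompacts X → NonemptyCompacts X :=
  fun n K => ⟨⟨f n '' (K : Set X), K.isCompact.image (hf n)⟩, K.nonempty.image _⟩

/-- The set `N(U, δ)` of sensitivity times. -/
def NSet {X : Type*} [PseudoMetricSpace X] (f : ℕ → X → X) (U : Set X) (δ : ℝ) : Set ℕ :=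
  {n | 0 < n ∧ ∃ x ∈ U, ∃ y ∈ U, δ < dist (iterN f n x) (iterN f n y)}

/-- Sensitive dependence on initial conditions. -/
def NASensitive {X : Type*} [PseudoMetricSpace X] (f : ℕ → X → X) : Prop :=
  ∃ δ : ℝ, 0 < δ ∧ ∀ x : X, ∀ U : Set X, IsOpen U → x ∈ U →
    ∃ y ∈ U, ∃ n : ℕ, 0 < n ∧ δ < dist (iterN f n x) (iterN f n y)

/-- A thick subset of ℕ. -/
def ThickSet (S : Set ℕ) : Prop := ∀ p : ℕ, ∃ n : ℕ, ∀ j ≤ p, n + j ∈ S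

/-- A syndetic subset of ℕ. -/
def SyndeticSet (S : Set ℕ) : Prop := ∃ a : ℕ, ∀ i : ℕ, ∃ j, i ≤ j ∧ j ≤ i + a ∧ j ∈ S

/-- Upper density of a subset of ℕ. -/
noncomputable def upperDens (S : Set ℕ) : ℝ :=
  Filter.limsup (fun n : ℕ => (Nat.card ↥(S ∩ Set.Iio n) : ℝ) / n) Filter.atTop

/-- Periodic point of a non-autonomous system. -/
def NAPeriodicPt {X : Type*} (f : ℕ → X → X) (x : X) : Prop :=
  ∃ n : ℕ, 0 < n ∧ ∀ k : ℕ, 0 < k → iterN f (n * k) x = x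

theorem continuous_iterN {X : Type*} [TopologicalSpace X] (f : ℕ → X → X)
    (hf : ∀ n, Continuous (f n)) (n : ℕ) : Continuous (iterN f n) := by
  induction n with
  | zero => exact continuous_id
  | succ n ih => exact (hf n).comp ih

theorem iterN_comm_single {X : Type*} (f : ℕ → X → X)
    (hc : ∀ i j, f i ∘ f j = f j ∘ f i) (j n : ℕ) (x : X) :
    f j (iterN f n x) = iterN f n (f j x) := by
  induction n generalizing x with
  | zero => rfl
  | succ n ih =>
    show f j (f n (iterN f n x)) = f n (iterN f n (f j x))
    rw [← ih, ← Function.comp_apply (f := f j) (g := f n), hc j n]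
    rfl

theorem iterN_comm {X : Type*} (f : ℕ → X → X)
    (hc : ∀ i j, f i ∘ f j = f j ∘ f i) (k n : ℕ) (x : X) :
    iterN f k (iterN f n x) = iterN f n (iterN f k x) := by
  induction k generalizing x with
  | zero => rfl
  | succ k ih =>
    show f k (iterN f k (iterN f n x)) = iterN f n (f k (iterN f k x))
    rw [ih, iterN_comm_single f hc]

/-- for a commutative non-autonomous system, Banks's condition implies
weak mixing. -/
theorem commutative_banks_implies_weaklyMixing {X : Type*} [MetricSpace X] [CompactSpace X]
    (f : ℕ → X → X) (hf : ∀ n, Continuous (f n))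
    (hc : ∀ i j, f i ∘ f j = f j ∘ f i) (h : NABanks f) : NAWeaklyMixing f := by
  intro U₁ U₂ V₁ V₂ hU₁ hU₂ hV₁ hV₂ hU₁n hU₂n hV₁n hV₂n
  obtain ⟨n, hn, ⟨p, ⟨a, ha, hap⟩, hpU₁⟩, ⟨q, ⟨b, hb, hbq⟩, hqV₁⟩⟩ :=
    h U₂ U₁ V₁ hU₂ hU₁ hV₁ hU₂n hU₁n hV₁n
  set A : Set X := U₂ ∩ (iterN f n) ⁻¹' U₁ with hA
  set B : Set X := U₂ ∩ (iterN f n) ⁻¹' V₁ with hB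
  have hAo : IsOpen A := hU₂.inter (hU₁.preimage (continuous_iterN f hf n))
  have hBo : IsOpen B := hU₂.inter (hV₁.preimage (continuous_iterN f hf n))
  have hAn : A.Nonempty := ⟨a, ha, by simpa [hap] using hpU₁⟩
  have hBn : B.Nonempty := ⟨b, hb, by simpa [hbq] using hqV₁⟩
  obtain ⟨k, hk, ⟨r, ⟨x, hx, hxr⟩, hrB⟩, ⟨s, ⟨y, hy, hys⟩, hsV₂⟩⟩ :=
    h A B V₂ hAo hBo hV₂ hAn hBn hV₂n
  refine ⟨k, hk, ?_, ?_⟩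
  · refine ⟨iterN f k (iterN f n x), ⟨iterN f n x, hx.2, rfl⟩, ?_⟩
    rw [iterN_comm f hc]
    have : iterN f k x ∈ B := by rwa [hxr]
    exact this.2
  · exact ⟨s, ⟨y, hy.1, hys⟩, hsV₂⟩
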